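/- arXiv:2410.14513 — 2 statements merged into one kernel-verified Lean document; each statement's English description precedes it below -/
import Mathlib

section
/- For the GARCH-CPC model with parameters ω ≥ 0, α > 0, φ > 0, β̃ ≥ 0 and β̃ + α γ₁² < ρ < 1: for every sequence of innovations (z_t) in ℝ and any initial values h_0 ≥ 0, q_0 ≥ 0, the recursively defined sequences satisfy h_t ≥ 0 and q_t ≥ 0 for all t ≥ 0 (positivity of the variance process). -/
open Real

theorem cpc_positivity_all_t
    (ω α φ β ρ γ₁ γ₂ : ℝ) (z h q : ℕ → ℝ)
    (hω : 0 ≤ ω) (hα : 0 < α) (hφ : 0 < φ) (hβ : 0 ≤ β)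
    (hρ₁ : β + α * γ₁ ^ 2 < ρ) (hρ₂ : ρ < 1)
    (hq0 : 0 ≤ q 0) (hh0 : 0 ≤ h 0)
    (hqrec : ∀ t, q (t + 1) = ω + ρ * q t + φ * (z t - γ₂ * Real.sqrt (h t)) ^ 2)
    (hhrec : ∀ t, h (t + 1) = q (t + 1) + β * (h t - q t)
        + α * ((z t - γ₁ * Real.sqrt (h t)) ^ 2 - γ₁ ^ 2 * q t)) :
    ∀ t, 0 ≤ h t ∧ 0 ≤ q t := by
  intro t
  induction t with
  | zero => exact ⟨hh0, hq0⟩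
  | succ t ih =>
    obtain ⟨iht, iqt⟩ := ih
    have hq' : 0 ≤ q (t + 1) := by
      rw [hqrec t]
      have h1 := sq_nonneg (z t - γ₂ * Real.sqrt (h t))
      have hρ0 : 0 ≤ ρ := by nlinarith [sq_nonneg γ₁]
      nlinarith [mul_nonneg hρ0 iqt, mul_nonneg hφ.le h1]
    refine ⟨?_, hq'⟩
    rw [hhrec t, hqrec t]
    have h1 := sq_nonneg (z t - γ₂ * Real.sqrt (h t))
    have h2 := sq_nonneg (z t - γ₁ * Real.sqrt (h t))
    nlinarith [mul_nonneg hβ iht, mul_nonneg (le_of_lt hα) h2,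
      mul_nonneg (le_of_lt hφ) h1, mul_nonneg (sub_nonneg.2 hρ₁.le) iqt]
end

section
/- One-step recursion of the moment generating function coefficients for GARCH-CPC: Suppose A', B₁', B₂' are real numbers with α B₁' + φ B₂' < 1/2, and define A = A' + rφ̂ + B₂' ω - (1/2) log(1 - 2(α B₁' + φ B₂')), B₁ = B₁'(β̃ + α γ₁²) + λφ̂ + B₂' φ γ₂² + 2(α γ₁ B₁' + φ γ₂ B₂' - φ̂/2)²/(1 - 2(α B₁' + φ B₂')), B₂ = B₂'(ρ + φ γ₂²) + λφ̂ + 2(α γ₁ B₁' + φ γ₂ B₂' - φ̂/2)²/(1 - 2(α B₁' + φ B₂')). Then for any s ∈ ℝ, h ≥ q ≥ 0 with h ≥ 0, and Z standard normal, with (R, h', q') given by the risk-neutral GARCH-CPC one-step dynamics driven by Z from state (s, h, q): E[exp(φ̂(s + R) + A' + B₁'(h'' - q'') + B₂' q'')] = exp(φ̂ s + A + B₁(h - q) + B₂ q), where (h'', q'') is the next variance state computed from (h, q) and Z. -/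
open MeasureTheory ProbabilityTheory Real

open scoped ENNReal NNReal

lemma gauss_quad_mgf (a b : ℝ) (ha : a < 1/2) :
    ∫ z, Real.exp (a * z ^ 2 + b * z) ∂(gaussianReal 0 1)
      = Real.exp (b ^ 2 / (2 * (1 - 2 * a)) - (1/2) * Real.log (1 - 2 * a)) := by
  have hpos : 0 < 1 - 2 * a := by linarith
  have h1 : (gaussianReal 0 1 : Measure ℝ)
      = volume.withDensity (gaussianPDF 0 1) := gaussianReal_of_var_ne_zero 0 one_ne_zero
  rw [h1]
  have hm : Measurable (fun x => (gaussianPDFReal 0 1 x).toNNReal) :=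
    (measurable_gaussianPDFReal 0 1).real_toNNReal
  have h2 : (gaussianPDF 0 1) = fun x => ((gaussianPDFReal 0 1 x).toNNReal : ℝ≥0∞) := by
    ext x; simp [gaussianPDF, ENNReal.ofReal]
  rw [h2, integral_withDensity_eq_integral_smul hm]
  have h3 : ∀ z : ℝ, (gaussianPDFReal 0 1 z).toNNReal • Real.exp (a * z ^ 2 + b * z)
      = ((√(2 * π))⁻¹ * Real.exp (b ^ 2 / (2 * (1 - 2 * a))))
        * Real.exp (-((1 - 2 * a)/2) * (z - b / (1 - 2 * a)) ^ 2) := by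
    intro z
    rw [NNReal.smul_def, smul_eq_mul, Real.coe_toNNReal _ (gaussianPDFReal_nonneg 0 1 z)]
    simp only [gaussianPDFReal, NNReal.coe_one, mul_one, sub_zero]
    rw [mul_assoc, ← Real.exp_add, mul_assoc, ← Real.exp_add]
    congr 2
    field_simp
    ring
  simp only [h3]
  rw [integral_const_mul]
  have h4 : ∫ z : ℝ, Real.exp (-((1 - 2 * a)/2) * (z - b / (1 - 2 * a)) ^ 2)
      = √(π / ((1 - 2 * a)/2)) := by
    rw [integral_sub_right_eq_self (fun z => Real.exp (-((1 - 2 * a)/2) * z ^ 2))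
      (b / (1 - 2 * a))]
    exact integral_gaussian _
  rw [h4]
  rw [Real.exp_sub]
  have h5 : √(π / ((1 - 2 * a)/2)) = √(2*π) / √(1 - 2*a) := by
    rw [← Real.sqrt_div' _ (le_of_lt hpos)]
    · congr 1; field_simp
  rw [h5]
  have h6 : Real.exp ((1/2) * Real.log (1 - 2*a)) = √(1 - 2*a) := by
    rw [show (1/2) * Real.log (1 - 2*a) = Real.log (1 - 2*a) / 2 by ring,
      ← Real.log_sqrt (le_of_lt hpos), Real.exp_log (Real.sqrt_pos.mpr hpos)]
  rw [h6]
  have h7 : √(2*π) ≠ 0 := ne_of_gt (Real.sqrt_pos.mpr (by positivity))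
  have h8 : √(1 - 2*a) ≠ 0 := ne_of_gt (Real.sqrt_pos.mpr hpos)
  field_simp

theorem cpc_mgf_recursion_step
    (ω ρ φ γ₁ γ₂ α β lam r φ' A' B₁' B₂' s h q : ℝ)
    (hh : 0 ≤ q) (hhq : q ≤ h)
    (ha : α * B₁' + φ * B₂' < 1/2) :
    let A := A' + r * φ' + B₂' * ω
        - (1/2) * Real.log (1 - 2 * (α * B₁' + φ * B₂'))
    let B₁ := B₁' * (β + α * γ₁ ^ 2) + lam * φ' + B₂' * φ * γ₂ ^ 2
        + 2 * (α * γ₁ * B₁' + φ * γ₂ * B₂' - φ' / 2) ^ 2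
            / (1 - 2 * (α * B₁' + φ * B₂'))
    let B₂ := B₂' * (ρ + φ * γ₂ ^ 2) + lam * φ'
        + 2 * (α * γ₁ * B₁' + φ * γ₂ * B₂' - φ' / 2) ^ 2
            / (1 - 2 * (α * B₁' + φ * B₂'))
    (∫ z, Real.exp (φ' * (s + (r + lam * h + Real.sqrt h * z))
        + A'
        + B₁' * (((ω + ρ * q + φ * (z - γ₂ * Real.sqrt h) ^ 2)
              + β * (h - q)
              + α * ((z - γ₁ * Real.sqrt h) ^ 2 - γ₁ ^ 2 * q))
            - (ω + ρ * q + φ * (z - γ₂ * Real.sqrt h) ^ 2))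
        + B₂' * (ω + ρ * q + φ * (z - γ₂ * Real.sqrt h) ^ 2))
        ∂(gaussianReal 0 1))
      = Real.exp (φ' * s + A + B₁ * (h - q) + B₂ * q) := by
  intro A B₁ B₂
  have hh0 : (0:ℝ) ≤ h := hh.trans hhq
  set t := Real.sqrt h with ht
  have hts : t ^ 2 = h := Real.sq_sqrt hh0
  set a := α * B₁' + φ * B₂' with hadef
  set c := α * γ₁ * B₁' + φ * γ₂ * B₂' - φ' / 2 with hcdef
  set b := (-2 * c) * t with hbdef
  set K := φ' * (s + r + lam * h) + A'
      + B₁' * (β * (h - q) + α * (γ₁ ^ 2 * h - γ₁ ^ 2 * q))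
      + B₂' * (ω + ρ * q + φ * γ₂ ^ 2 * h) with hKdef
  have hne : (1 - 2 * a) ≠ 0 := by
    have : 0 < 1 - 2 * a := by simp only [hadef]; linarith
    exact ne_of_gt this
  have key : ∀ z : ℝ, Real.exp (φ' * (s + (r + lam * h + t * z))
        + A'
        + B₁' * (((ω + ρ * q + φ * (z - γ₂ * t) ^ 2)
              + β * (h - q)
              + α * ((z - γ₁ * t) ^ 2 - γ₁ ^ 2 * q))
            - (ω + ρ * q + φ * (z - γ₂ * t) ^ 2))
        + B₂' * (ω + ρ * q + φ * (z - γ₂ * t) ^ 2))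
      = Real.exp K * Real.exp (a * z ^ 2 + b * z) := by
    intro z
    rw [← Real.exp_add]
    congr 1
    rw [hKdef, hbdef, hcdef, hadef, ← hts]
    ring
  simp only [key]
  rw [integral_const_mul, gauss_quad_mgf a b ha, ← Real.exp_add]
  congr 1
  simp only [A, B₁, B₂, hKdef, hbdef]
  rw [← hadef, ← hcdef, ← hts]
  field_simp
  ring
end
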